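/- arXiv:0903.3200 — 9 statements merged into one kernel-verified Lean document; each statement's English description precedes it below -/
import Mathlib

section
/- Let G be an abelian group and A, B ⊆ G finite nonempty subsets. If |A+B| ≤ |A| + |B| - k, then every element x of A+B has at least k representations as x = a + b with a ∈ A and b ∈ B. -/
open Pointwise

private lemma stmt_0_aux {G : Type*} [AddCommGroup G] [DecidableEq G] :
    ∀ n (A B : Finset G), B.card = n → B.Nonempty → ∀ k : ℕ,
      (A + B).card + k ≤ A.card + B.card →
      ∀ x ∈ A + B, k ≤ ((A ×ˢ B).filter (fun p => p.1 + p.2 = x)).card := by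
  intro n
  induction n using Nat.strong_induction_on with
  | _ n ih =>
    intro A B hn hB k h x hx
    classical
    obtain ⟨a₁, ha₁, b₁, hb₁, hab₁⟩ := Finset.mem_add.1 hx
    by_cases hdeg : ∀ a ∈ A, ∀ b ∈ B, a + b - b₁ ∈ A
    · -- degenerate case: A + B ⊆ A + b₁, so r(x) ≥ |B| ≥ k
      -- first, for each b ∈ B, the map a ↦ a + b - b₁ is a bijection of A
      have key : ∀ b ∈ B, ∀ a ∈ A, a + b₁ - b ∈ A := by
        intro b hb a ha
        have hsub : A.image (fun a => a + b - b₁) ⊆ A := by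
          intro y hy
          obtain ⟨a', ha', rfl⟩ := Finset.mem_image.1 hy
          exact hdeg a' ha' b hb
        have hinj : Set.InjOn (fun a => a + b - b₁) A := by
          intro u _ v _ huv
          simpa using huv
        have hcard : A.card ≤ (A.image (fun a => a + b - b₁)).card := by
          rw [Finset.card_image_of_injOn hinj]
        have heq : A.image (fun a => a + b - b₁) = A :=
          Finset.eq_of_subset_of_card_le hsub hcard
        have : a ∈ A.image (fun a => a + b - b₁) := heq.symm ▸ ha
        obtain ⟨a', ha', haa'⟩ := Finset.mem_image.1 this
        have : a + b₁ - b = a' := by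
          have := haa'
          rw [← this]
          abel
        rw [this]
        exact ha'
      -- every b ∈ B gives a representation (x - b, b)
      have hrep : B.image (fun b => (x - b, b)) ⊆
          (A ×ˢ B).filter (fun p => p.1 + p.2 = x) := by
        intro p hp
        obtain ⟨b, hb, rfl⟩ := Finset.mem_image.1 hp
        refine Finset.mem_filter.2 ⟨Finset.mem_product.2 ⟨?_, hb⟩, by simp⟩
        have : x - b = a₁ + b₁ - b := by rw [← hab₁]
        rw [this]
        exact key b hb a₁ ha₁
      have hBcard : B.card ≤ ((A ×ˢ B).filter (fun p => p.1 + p.2 = x)).card := by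
        calc B.card = (B.image (fun b => (x - b, b))).card := by
              rw [Finset.card_image_of_injOn]
              intro u _ v _ huv
              simpa using congrArg Prod.snd huv
          _ ≤ _ := Finset.card_le_card hrep
      have hA_le : A.card ≤ (A + B).card := Finset.card_le_card_add_right hB
      omega
    · -- non-degenerate: apply the e-transform
      push_neg at hdeg
      obtain ⟨a₀, ha₀, b₀, hb₀, hnot⟩ := hdeg
      set e : G := a₀ - b₁ with he
      set C : Finset G := B.image (fun b => b + e) with hC
      set A' : Finset G := A ∪ C with hA'
      set B' : Finset G := B.filter (fun b => b + e ∈ A) with hB'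
      have hb₁B' : b₁ ∈ B' := by
        refine Finset.mem_filter.2 ⟨hb₁, ?_⟩
        have : b₁ + e = a₀ := by rw [he]; abel
        rw [this]; exact ha₀
      have hB'ne : B'.Nonempty := ⟨b₁, hb₁B'⟩
      have hb₀notB' : b₀ ∉ B' := by
        intro hmem
        have := (Finset.mem_filter.1 hmem).2
        apply hnot
        have : b₀ + e = a₀ + b₀ - b₁ := by rw [he]; abel
        rw [← this]
        exact (Finset.mem_filter.1 hmem).2
      have hB'lt : B'.card < B.card := by
        apply Finset.card_lt_card
        exact ⟨Finset.filter_subset _ _, fun hsub => hb₀notB' (hsub hb₀)⟩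
      -- cardinality identity
      have hAC : A ∩ C = B'.image (fun b => b + e) := by
        ext y
        simp only [Finset.mem_inter, Finset.mem_image, hC, hB', Finset.mem_filter]
        constructor
        · rintro ⟨hyA, b, hb, rfl⟩
          exact ⟨b, ⟨hb, hyA⟩, rfl⟩
        · rintro ⟨b, ⟨hb, hbA⟩, rfl⟩
          exact ⟨hbA, b, hb, rfl⟩
      have hinj_e : ∀ (s : Finset G), (s.image (fun b => b + e)).card = s.card := by
        intro s
        apply Finset.card_image_of_injOn
        intro u _ v _ huv
        simpa using huv
      have hcards : A'.card + B'.card = A.card + B.card := by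
        have h1 : (A ∪ C).card + (A ∩ C).card = A.card + C.card :=
          Finset.card_union_add_card_inter A C
        have h2 : (A ∩ C).card = B'.card := by rw [hAC, hinj_e]
        have h3 : C.card = B.card := hinj_e B
        rw [hA']
        omega
      -- A' + B' ⊆ A + B
      have hsum_sub : A' + B' ⊆ A + B := by
        intro y hy
        obtain ⟨u, hu, b, hb, rfl⟩ := Finset.mem_add.1 hy
        have hbB : b ∈ B := Finset.mem_of_mem_filter b hb
        rcases Finset.mem_union.1 hu with huA | huC
        · exact Finset.add_mem_add huA hbB
        · obtain ⟨c, hc, rfl⟩ := Finset.mem_image.1 huC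
          have hbe : b + e ∈ A := (Finset.mem_filter.1 hb).2
          have : c + e + b = (b + e) + c := by abel
          rw [this]
          exact Finset.add_mem_add hbe hc
      have hx' : x ∈ A' + B' :=
        Finset.mem_add.2 ⟨a₁, Finset.mem_union_left _ ha₁, b₁, hb₁B', hab₁⟩
      have hhyp' : (A' + B').card + k ≤ A'.card + B'.card := by
        have := Finset.card_le_card hsum_sub
        omega
      have hIH := ih B'.card (hn ▸ hB'lt) A' B' rfl hB'ne k hhyp' x hx'
      -- transfer representations back via an injection
      have hfinal : ((A' ×ˢ B').filter (fun p => p.1 + p.2 = x)).card ≤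
          ((A ×ˢ B).filter (fun p => p.1 + p.2 = x)).card := by
        apply Finset.card_le_card_of_injOn
          (fun p => if p.1 ∈ A then p else (p.2 + e, p.1 - e))
        · intro p hp
          obtain ⟨hpm, hpsum⟩ := Finset.mem_filter.1 hp
          obtain ⟨hp1, hp2⟩ := Finset.mem_product.1 hpm
          have hp2B : p.2 ∈ B := Finset.mem_of_mem_filter _ hp2
          by_cases hpa : p.1 ∈ A
          · simp only [hpa, if_pos]
            exact Finset.mem_filter.2 ⟨Finset.mem_product.2 ⟨hpa, hp2B⟩, hpsum⟩
          · simp only [hpa, if_neg, not_false_iff]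
            have hp1C : p.1 ∈ C := (Finset.mem_union.1 hp1).resolve_left hpa
            obtain ⟨c, hc, hce⟩ := Finset.mem_image.1 hp1C
            refine Finset.mem_filter.2 ⟨Finset.mem_product.2 ⟨(Finset.mem_filter.1 hp2).2, ?_⟩, ?_⟩
            · have : p.1 - e = c := by rw [← hce]; abel
              rw [this]; exact hc
            · show p.2 + e + (p.1 - e) = x
              have : p.2 + e + (p.1 - e) = p.1 + p.2 := by abel
              rw [this]; exact hpsum
        · intro p hp q hq hfq
          simp only [Finset.coe_filter, Set.mem_setOf_eq] at hp hq
          obtain ⟨hpm, _⟩ := hp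
          obtain ⟨hqm, _⟩ := hq
          obtain ⟨hp1, hp2⟩ := Finset.mem_product.1 hpm
          obtain ⟨hq1, hq2⟩ := Finset.mem_product.1 hqm
          by_cases hpa : p.1 ∈ A <;> by_cases hqa : q.1 ∈ A
          · simpa [hpa, hqa] using hfq
          · exfalso
            simp only [hpa, hqa, if_pos, if_neg, not_false_iff] at hfq
            apply hqa
            have : q.1 = p.2 + e := by
              have := congrArg Prod.snd hfq
              simp at this
              rw [this]; abel
            rw [this]
            exact (Finset.mem_filter.1 hp2).2
          · exfalso
            simp only [hpa, hqa, if_pos, if_neg, not_false_iff] at hfq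
            apply hpa
            have : p.1 = q.2 + e := by
              have := congrArg Prod.snd hfq
              simp at this
              rw [← this]; abel
            rw [this]
            exact (Finset.mem_filter.1 hq2).2
          · simp only [hpa, hqa, if_neg, not_false_iff, Prod.mk.injEq] at hfq
            obtain ⟨h1, h2⟩ := hfq
            have e1 : p.2 = q.2 := by
              have := h1; simpa using this
            have e2 : p.1 = q.1 := by
              have : p.1 - e = q.1 - e := h2
              have := congrArg (fun y => y + e) this
              simpa using this
            exact Prod.ext e2 e1
      exact hIH.trans hfinal

theorem stmt_0 {G : Type*} [AddCommGroup G] [DecidableEq G]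
    (A B : Finset G) (hA : A.Nonempty) (hB : B.Nonempty) (k : ℕ)
    (h : (A + B).card + k ≤ A.card + B.card) :
    ∀ x ∈ A + B, k ≤ ((A ×ˢ B).filter (fun p => p.1 + p.2 = x)).card :=
  stmt_0_aux B.card A B rfl hB k h
end

section
/- Let G be a finite abelian group of order n and let S be a sequence over G of length n - 1. If S has no nonempty zero-sum subsequence, then S = g^{n-1} for some generator g of G (in particular G is cyclic). -/
theorem stmt_4 {G : Type*} [AddCommGroup G] [Fintype G] (S : Multiset G)
    (hS : Multiset.card S = Fintype.card G - 1)
    (h : ∀ T : Multiset G, T ≤ S → T ≠ 0 → T.sum ≠ 0) :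
    ∃ g : G, AddSubgroup.zmultiples g = ⊤ ∧
      S = Multiset.replicate (Fintype.card G - 1) g := by
  classical
  have hn1 : 1 ≤ Fintype.card G := Fintype.card_pos
  -- Key: distinct partial sums
  have key : ∀ l : List G, (↑l : Multiset G) ≤ S →
      ∀ k k' : ℕ, k < k' → k' ≤ l.length → (l.take k).sum ≠ (l.take k').sum := by
    intro l hl k k' hkk hk' heq
    have h1 : l.take k' = l.take k ++ (l.drop k).take (k' - k) := by
      rw [← List.take_add]; congr 1; omega
    set m := (l.drop k).take (k' - k) with hm
    have hms : (l.take k').sum = (l.take k).sum + m.sum := by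
      rw [h1, List.sum_append]
    have hzero : m.sum = 0 := by
      rw [hms] at heq
      exact (left_eq_add.mp heq)
    have hmlen : m.length = min (k' - k) (l.length - k) := by
      simp [hm, List.length_take, List.length_drop]
    have hmne : m ≠ [] := by
      intro hnil
      rw [hnil] at hmlen
      simp at hmlen
      omega
    have hsub : (↑m : Multiset G) ≤ S := by
      refine le_trans ?_ hl
      have hsl : m.Sublist l := (List.take_sublist _ _).trans (List.drop_sublist _ _)
      exact hsl.subperm
    exact h (↑m) hsub (by simpa using hmne) (by simpa using hzero)
  -- Bijectivity of partial-sum map for a list enumerating S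
  have hbij : ∀ l : List G, (↑l : Multiset G) = S →
      Function.Bijective (fun k : Fin (l.length + 1) => (l.take (k : ℕ)).sum) := by
    intro l hl
    have hle : (↑l : Multiset G) ≤ S := le_of_eq hl
    have hinj : Function.Injective
        (fun k : Fin (l.length + 1) => (l.take (k : ℕ)).sum) := by
      intro k k' hkk
      by_contra hne
      rcases lt_or_gt_of_ne (fun hv => hne hv) with hlt | hlt
      · exact key l hle k k' hlt (by omega) hkk
      · exact key l hle k' k hlt (by omega) hkk.symm
    have hcard : Fintype.card (Fin (l.length + 1)) = Fintype.card G := by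
      have : l.length = Multiset.card S := by
        rw [← hl]; simp
      simp [this, hS]
      omega
    exact (Fintype.bijective_iff_injective_and_card _).mpr ⟨hinj, hcard⟩
  -- All elements of S are equal
  have hall : ∀ a ∈ S, ∀ b ∈ S, a = b := by
    intro a ha b hb
    by_contra hab
    have hb' : b ∈ S.erase a := (Multiset.mem_erase_of_ne (fun hba => hab hba.symm)).mpr hb
    set R := (S.erase a).erase b with hR
    have hSR : S = a ::ₘ b ::ₘ R := by
      rw [hR, Multiset.cons_erase hb', Multiset.cons_erase ha]
    set l := R.toList with hl
    have hlR : (↑l : Multiset G) = R := Multiset.coe_toList R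
    have h1 : (↑(a :: b :: l) : Multiset G) = S := by
      rw [hSR, ← hlR, Multiset.cons_coe, Multiset.cons_coe]
    have h2 : (↑(b :: a :: l) : Multiset G) = S := by
      rw [← h1]
      exact Multiset.coe_eq_coe.mpr (List.Perm.swap a b l)
    have hB1 := hbij (a :: b :: l) h1
    have hB2 := hbij (b :: a :: l) h2
    have hlen : (a :: b :: l).length = (b :: a :: l).length := by simp
    -- the two maps agree off index 1
    have hagree : ∀ k : ℕ, k ≠ 1 → ((a :: b :: l).take k).sum = ((b :: a :: l).take k).sum := by
      intro k hk
      match k with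
      | 0 => simp
      | 1 => exact absurd rfl hk
      | (k + 2) =>
        simp only [List.take_succ_cons, List.sum_cons]
        abel
    obtain ⟨j, hj⟩ := hB1.surjective b
    replace hj : ((a :: b :: l).take (j : ℕ)).sum = b := hj
    have hone : (1 : ℕ) < (a :: b :: l).length + 1 := by simp
    by_cases hj1 : (j : ℕ) = 1
    · -- then b = a
      have : ((a :: b :: l).take (j : ℕ)).sum = a := by
        rw [hj1]; simp
      rw [this] at hj
      exact hab hj
    · have hjval : ((b :: a :: l).take (j : ℕ)).sum = b := by
        rw [← hagree (j : ℕ) hj1]; exact hj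
      have hj2 : ((b :: a :: l).take ((⟨1, by simp⟩ : Fin ((b :: a :: l).length + 1)) : ℕ)).sum = b := by
        simp
      have : (⟨(j : ℕ), by omega⟩ : Fin ((b :: a :: l).length + 1)) = ⟨1, by simp⟩ :=
        hB2.injective (by simpa using hjval.trans hj2.symm)
      exact hj1 (by simpa using congrArg Fin.val this)
  -- Conclude
  rcases eq_or_ne S 0 with hS0 | hS0
  · -- trivial group
    have hcard1 : Fintype.card G = 1 := by
      have : Multiset.card S = 0 := by simp [hS0]
      omega
    have hsub : Subsingleton G := by
      rw [← Fintype.card_le_one_iff_subsingleton]; omega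
    refine ⟨0, ?_, ?_⟩
    · ext x
      simp [Subsingleton.elim x 0]
    · rw [hS0, hcard1]
      simp
  · obtain ⟨g, hg⟩ := Multiset.exists_mem_of_ne_zero hS0
    have hrep : S = Multiset.replicate (Fintype.card G - 1) g := by
      rw [Multiset.eq_replicate]
      exact ⟨hS, fun b hb => hall b hb g hg⟩
    refine ⟨g, ?_, hrep⟩
    -- g generates G
    set l := List.replicate (Fintype.card G - 1) g with hl
    have hlS : (↑l : Multiset G) = S := by
      rw [hrep, hl, Multiset.coe_replicate]
    have hB := hbij l hlS
    rw [AddSubgroup.eq_top_iff']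
    intro x
    obtain ⟨k, hk⟩ := hB.surjective x
    have hk' : (min (k : ℕ) (Fintype.card G - 1)) • g = x := by
      rw [← hk]
      simp [hl, List.take_replicate, List.sum_replicate]
    rw [AddSubgroup.mem_zmultiples_iff]
    exact ⟨((min (k : ℕ) (Fintype.card G - 1) : ℕ) : ℤ), by rw [natCast_zsmul]; exact hk'⟩
end

section
/- Let G be an abelian group, g ∈ G, and let R be a nontrivial (nonempty) sequence over G such that every nonempty subsequence sum of R lies in {g, 2g, …, |R|·g}. If |R| ≤ ord(g) - 1 and σ(R) = |R|·g, then R consists of |R| copies of g. -/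
theorem stmt_6 {G : Type*} [AddCommGroup G] (g : G) (R : Multiset G) (hR : R ≠ 0)
    (hsub : ∀ U : Multiset G, U ≤ R → U ≠ 0 →
      ∃ k : ℕ, 1 ≤ k ∧ k ≤ Multiset.card R ∧ U.sum = k • g)
    (hcard : Multiset.card R ≤ addOrderOf g - 1)
    (hsum : R.sum = (Multiset.card R) • g) :
    R = Multiset.replicate (Multiset.card R) g := by
  classical
  set n := Multiset.card R with hn
  set N := addOrderOf g with hN
  have hn1 : 1 ≤ n := by
    have : 0 < n := Multiset.card_pos.2 hR
    omega
  have hNn : n + 1 ≤ N := by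
    rcases Nat.eq_zero_or_pos N with h0 | h1
    · rw [h0] at hcard; omega
    · omega
  -- divisibility lemma
  have hdvd : ∀ a b : ℕ, b ≤ a → a • g = b • g → N ∣ a - b := by
    intro a b hba h
    have h2 : b • g + (a - b) • g = b • g + 0 := by
      rw [← add_nsmul, Nat.add_sub_cancel' hba, h, add_zero]
    have h3 : (a - b) • g = 0 := add_left_cancel h2
    exact addOrderOf_dvd_of_nsmul_eq_zero h3
  have huniq : ∀ a b : ℕ, a < N → b < N → a • g = b • g → a = b := by
    intro a b ha hb h
    rcases le_total b a with hle | hle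
    · have hd := hdvd a b hle h
      rcases Nat.eq_zero_or_pos (a - b) with h0 | hpos
      · omega
      · have := Nat.le_of_dvd hpos hd; omega
    · have hd := hdvd b a hle h.symm
      rcases Nat.eq_zero_or_pos (b - a) with h0 | hpos
      · omega
      · have := Nat.le_of_dvd hpos hd; omega
  -- refined: proper subsets have rep ≤ n - 1
  have hsub' : ∀ U : Multiset G, U ≤ R → U ≠ 0 → Multiset.card U ≤ n - 1 →
      ∃ k : ℕ, 1 ≤ k ∧ k ≤ n - 1 ∧ U.sum = k • g := by
    intro U hUR hU0 hUc
    obtain ⟨k, hk1, hk2, hks⟩ := hsub U hUR hU0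
    set V := R - U with hV
    have hUV : U + V = R := add_tsub_cancel_of_le hUR
    have hVcard : Multiset.card U + Multiset.card V = n := by
      rw [← Multiset.card_add, hUV]
    have hV0 : V ≠ 0 := by
      intro h
      rw [h, Multiset.card_zero] at hVcard
      omega
    obtain ⟨k', hk'1, hk'2, hk's⟩ := hsub V tsub_le_self hV0
    have hsumUV : (k + k') • g = n • g := by
      rw [add_nsmul, ← hks, ← hk's, ← Multiset.sum_add, hUV, hsum]
    have hkk : k + k' = n := by
      rcases le_total n (k + k') with hle | hle
      · have hd := hdvd (k + k') n hle hsumUV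
        rcases Nat.eq_zero_or_pos (k + k' - n) with h0 | hpos
        · omega
        · have := Nat.le_of_dvd hpos hd; omega
      · have hd := hdvd n (k + k') hle hsumUV.symm
        rcases Nat.eq_zero_or_pos (n - (k + k')) with h0 | hpos
        · omega
        · have := Nat.le_of_dvd hpos hd; omega
    exact ⟨k, hk1, by omega, hks⟩
  -- the list
  set L := R.toList with hL
  have hLR : (L : Multiset G) = R := Multiset.coe_toList R
  have hLlen : L.length = n := by rw [hL, Multiset.length_toList]
  have hPle : ∀ i j : ℕ, i ≤ j → ((L.take i : List G) : Multiset G) ≤ ((L.take j : List G) : Multiset G) := by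
    intro i j hij
    have h : L.take i = (L.take j).take i := by rw [List.take_take, Nat.min_eq_left hij]
    rw [h]
    exact Multiset.coe_le.2 (List.take_sublist _ _).subperm
  have hPR : ∀ j : ℕ, ((L.take j : List G) : Multiset G) ≤ R := by
    intro j
    rw [← hLR]
    exact Multiset.coe_le.2 (List.take_sublist _ _).subperm
  have hPcard : ∀ j : ℕ, j ≤ n → Multiset.card ((L.take j : List G) : Multiset G) = j := by
    intro j hj
    rw [Multiset.coe_card, List.length_take, hLlen, Nat.min_eq_left hj]
  -- choose y
  have hy0 : ∀ j : ℕ, ∃ k : ℕ, j ≤ n →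
      ((L.take j).sum = k • g ∧ k ≤ n ∧ (1 ≤ j → 1 ≤ k) ∧ (1 ≤ j → j + 1 ≤ n → k ≤ n - 1)) := by
    intro j
    rcases Nat.eq_zero_or_pos j with h0 | h1
    · exact ⟨0, fun _ => by subst h0; simp⟩
    · by_cases hjn : j + 1 ≤ n
      · have hne : ((L.take j : List G) : Multiset G) ≠ 0 := by
          intro h
          have := hPcard j (by omega)
          rw [h] at this
          simp at this
          omega
        obtain ⟨k, hk1, hk2, hks⟩ := hsub' _ (hPR j) hne (by rw [hPcard j (by omega)]; omega)
        rw [Multiset.sum_coe] at hks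
        exact ⟨k, fun _ => ⟨hks, by omega, fun _ => hk1, fun _ _ => hk2⟩⟩
      · by_cases hjn2 : j ≤ n
        swap
        · exact ⟨0, fun h => absurd h hjn2⟩
        have hjn' : j = n := by omega
        subst hjn'
        have hLt : L.take n = L := by rw [← hLlen]; exact List.take_length
        obtain ⟨k, hk1, hk2, hks⟩ := hsub R le_rfl hR
        have hkn : k = n := by
          apply huniq k n (by omega) (by omega)
          rw [← hks, hsum]
        refine ⟨n, fun _ => ⟨?_, le_rfl, fun _ => hn1, fun _ h => by omega⟩⟩
        rw [hLt, ← Multiset.sum_coe, hLR, hsum]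
  choose y hy using hy0
  have hyS : ∀ j, j ≤ n → (L.take j).sum = y j • g := fun j h => ((hy j) h).1
  have hyU : ∀ j, j ≤ n → y j ≤ n := fun j h => ((hy j) h).2.1
  have hyL : ∀ j, 1 ≤ j → j ≤ n → 1 ≤ y j := fun j h1 h2 => ((hy j) h2).2.2.1 h1
  have hyP : ∀ j, 1 ≤ j → j + 1 ≤ n → y j ≤ n - 1 := fun j h1 h2 => ((hy j) (by omega)).2.2.2 h1 h2
  have hyn : y n = n := by
    apply huniq (y n) n (by have := hyU n le_rfl; omega) (by omega)
    rw [← hyS n le_rfl]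
    have hLt : L.take n = L := by rw [← hLlen]; exact List.take_length
    rw [hLt, ← Multiset.sum_coe, hLR, hsum]
  -- segment lemma
  have hseg : ∀ i j : ℕ, 1 ≤ i → i < j → j ≤ n → (y i < y j ∨ y j + 2 ≤ y i) := by
    intro i j hi hij hjn
    set A := ((L.take i : List G) : Multiset G) with hA
    set B := ((L.take j : List G) : Multiset G) with hB
    have hAB : A ≤ B := hPle i j (le_of_lt hij)
    set M := B - A with hM
    have hMB : A + M = B := add_tsub_cancel_of_le hAB
    have hMcard : Multiset.card A + Multiset.card M = j := by
      rw [← Multiset.card_add, hMB, hPcard j hjn]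
    have hAcard : Multiset.card A = i := hPcard i (by omega)
    have hM0 : M ≠ 0 := by
      intro h; rw [h] at hMcard; simp at hMcard; omega
    have hMR : M ≤ R := le_trans tsub_le_self (hPR j)
    obtain ⟨k, hk1, hk2, hks⟩ := hsub' M hMR hM0 (by omega)
    have hkey : (y i + k) • g = y j • g := by
      rw [add_nsmul, ← hks, ← hyS i (by omega)]
      have : A.sum + M.sum = B.sum := by rw [← Multiset.sum_add, hMB]
      rw [hA] at this
      rw [Multiset.sum_coe] at this
      rw [this, hB, Multiset.sum_coe, hyS j hjn]
    have hyi : y i ≤ n := hyU i (by omega)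
    have hyj1 : 1 ≤ y j := hyL j (by omega) hjn
    have hyjU : y j ≤ n := hyU j hjn
    rcases le_total (y j) (y i + k) with hle | hle
    · have hd := hdvd (y i + k) (y j) hle hkey
      obtain ⟨c, hc⟩ := hd
      rcases Nat.eq_zero_or_pos c with h0 | hc1
      · rw [h0, Nat.mul_zero] at hc; left; omega
      · have hc2 : c < 2 := by
          by_contra hh
          push_neg at hh
          have h2N : N * 2 ≤ N * c := Nat.mul_le_mul le_rfl hh
          omega
        have hc1' : c = 1 := by omega
        rw [hc1', Nat.mul_one] at hc
        right; omega
    · have hd := hdvd (y j) (y i + k) hle hkey.symm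
      obtain ⟨c, hc⟩ := hd
      rcases Nat.eq_zero_or_pos c with h0 | hc1
      · rw [h0, Nat.mul_zero] at hc; left; omega
      · exfalso
        have h1N : N * 1 ≤ N * c := Nat.mul_le_mul le_rfl hc1
        omega
  -- injectivity and surjectivity on Icc 1 (n-1)
  have hmem : ∀ j ∈ Finset.Icc 1 (n-1), y j ∈ Finset.Icc 1 (n-1) := by
    intro j hj
    rw [Finset.mem_Icc] at hj ⊢
    exact ⟨hyL j hj.1 (by omega), hyP j hj.1 (by omega)⟩
  have hinj : Set.InjOn y (Finset.Icc 1 (n-1) : Finset ℕ) := by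
    intro i hi j hj hne
    by_contra hne2
    rw [Finset.coe_Icc, Set.mem_Icc] at hi hj
    rcases lt_trichotomy i j with h | h | h
    · rcases hseg i j hi.1 h (by omega) with hh | hh <;> omega
    · exact hne2 h
    · rcases hseg j i hj.1 h (by omega) with hh | hh <;> omega
  have himage : (Finset.Icc 1 (n-1)).image y = Finset.Icc 1 (n-1) := by
    apply Finset.eq_of_subset_of_card_le
    · intro v hv
      rw [Finset.mem_image] at hv
      obtain ⟨j, hj, rfl⟩ := hv
      exact hmem j hj
    · rw [Finset.card_image_of_injOn hinj]
  have hsurj : ∀ v ∈ Finset.Icc 1 (n-1), ∃ t ∈ Finset.Icc 1 (n-1), y t = v := by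
    intro v hv
    rw [← himage, Finset.mem_image] at hv
    obtain ⟨t, ht, hyt⟩ := hv
    exact ⟨t, ht, hyt⟩
  -- no inversions
  have hnoinv : ∀ d : ℕ, ∀ i j : ℕ, 1 ≤ i → i < j → j ≤ n - 1 → y j < y i → y i - y j ≠ d := by
    intro d
    induction d using Nat.strong_induction_on with
    | _ d IH =>
      intro i j hi hij hj hlt hd
      have hgap : y j + 2 ≤ y i := by
        rcases hseg i j hi hij (by omega) with h | h
        · omega
        · exact h
      have hyiP : y i ≤ n - 1 := hyP i hi (by omega)
      have hv : y j + 1 ∈ Finset.Icc 1 (n-1) := by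
        rw [Finset.mem_Icc]; omega
      obtain ⟨t, ht, hyt⟩ := hsurj _ hv
      rw [Finset.mem_Icc] at ht
      rcases lt_trichotomy t j with h | h | h
      · rcases hseg t j ht.1 h (by omega) with hh | hh <;> omega
      · rw [h] at hyt; omega
      · exact IH (d - 1) (by omega) i t hi (by omega) ht.2 (by omega) (by omega)
  have hmono : ∀ i j, 1 ≤ i → i < j → j ≤ n - 1 → y i < y j := by
    intro i j hi hij hj
    by_contra h
    have hlt : y j < y i := by
      rcases hseg i j hi hij (by omega) with hh | hh <;> omega
    exact hnoinv (y i - y j) i j hi hij hj hlt rfl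
  -- identity
  have hylow : ∀ j, 1 ≤ j → j ≤ n - 1 → j ≤ y j := by
    intro j
    induction j with
    | zero => omega
    | succ j IHj =>
      intro h1 h2
      rcases Nat.eq_zero_or_pos j with h0 | hp
      · subst h0; exact hyL 1 le_rfl (by omega)
      · have ha := IHj hp (by omega)
        have hb := hmono j (j+1) hp (by omega) h2
        omega
  have hyhigh : ∀ t, ∀ j, j = n - 1 - t → 1 ≤ j → y j ≤ j := by
    intro t
    induction t with
    | zero =>
      intro j hj h1
      have := hyP j h1 (by omega)
      omega
    | succ t IHt =>
      intro j hj h1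
      have hj1 : j + 1 = n - 1 - t := by omega
      have ha := IHt (j+1) hj1 (by omega)
      have hb := hmono j (j+1) h1 (by omega) (by omega)
      omega
  have hyid : ∀ j, 1 ≤ j → j ≤ n → y j = j := by
    intro j h1 h2
    rcases eq_or_lt_of_le h2 with he | hl
    · rw [he, hyn]
    · have ha := hylow j h1 (by omega)
      have hb := hyhigh (n - 1 - j) j (by omega) h1
      omega
  -- conclude every entry is g
  have hget : ∀ (i : ℕ) (hi : i < L.length), L[i] = g := by
    intro i hi
    have hi' : i < n := by omega
    have h1 : (L.take (i+1)).sum = (L.take i).sum + L[i] := List.sum_take_succ L i hi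
    have h2 : (L.take (i+1)).sum = (i+1) • g := by
      rw [hyS (i+1) (by omega), hyid (i+1) (by omega) (by omega)]
    have h3 : (L.take i).sum = i • g := by
      rcases Nat.eq_zero_or_pos i with h0 | hp
      · subst h0; simp
      · rw [hyS i (by omega), hyid i hp (by omega)]
    have h4 : i • g + L[i] = i • g + g := by
      rw [← h3, ← h1, h2, succ_nsmul]
      rw [h3]
    exact add_left_cancel h4
  rw [Multiset.eq_replicate]
  refine ⟨rfl, ?_⟩
  intro b hb
  rw [← hLR, Multiset.mem_coe] at hb
  obtain ⟨i, hig⟩ := List.mem_iff_get.1 hb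
  rw [← hig, List.get_eq_getElem]
  exact hget i.1 i.2
end

section
/- Let n ≥ 1, let g, h ∈ C_n with g a generator, and let S = g^l h^{n-l} be a sequence over C_n with l ≥ n - l ≥ 1. Suppose the set of nonempty subsequence sums of h^{n-l} equals {g, 2g, …, (n-l-1)g} ∪ {b₀} for some b₀ ∈ C_n, and suppose there is a unique r ∈ [1, n] such that some sub-multiset of S of size r sums to zero. Then either S = g^{n-1}h, or n is odd, h = ((n+1)/2)·g, and S = g^{n-2}h². -/
lemma aux_nsmul_inj {n : ℕ} {g : ZMod n} (hg : addOrderOf g = n)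
    {a b : ℕ} (ha : a < n) (hb : b < n) (hab : a • g = b • g) : a = b := by
  have key : ∀ x y : ℕ, x ≤ y → y < n → x • g = y • g → x = y := by
    intro x y hxy hy hxyg
    have h1 : (y - x) • g + x • g = x • g := by
      rw [← add_nsmul, Nat.sub_add_cancel hxy, hxyg]
    have h2 : (y - x) • g = 0 := by simpa using h1
    have h3 : n ∣ y - x := by rw [← hg]; exact addOrderOf_dvd_of_nsmul_eq_zero h2
    have := Nat.eq_zero_of_dvd_of_lt h3
    omega
  rcases le_total a b with hab' | hab'
  · exact key a b hab' hb hab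
  · exact (key b a hab' ha hab.symm).symm

lemma aux_reduce {n : ℕ} {g : ZMod n} (hg : addOrderOf g = n) (a : ℕ) :
    a • g = (a % n) • g := by
  conv_lhs => rw [← Nat.div_add_mod a n]
  have h0 : n • g = 0 := by
    have := addOrderOf_nsmul_eq_zero g
    rwa [hg] at this
  rw [add_nsmul, mul_comm, mul_smul, h0, smul_zero, zero_add]

lemma aux_log {n : ℕ} (hn : 0 < n) {g : ZMod n} (hg : addOrderOf g = n) (x : ZMod n) :
    ∃ t, t < n ∧ x = t • g := by
  haveI : NeZero n := ⟨hn.ne'⟩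
  have hinj : Function.Injective (fun i : Fin n => i.val • g) := by
    intro i j hij
    exact Fin.ext (aux_nsmul_inj hg i.isLt j.isLt hij)
  have hbij : Function.Bijective (fun i : Fin n => i.val • g) :=
    (Fintype.bijective_iff_injective_and_card _).2 ⟨hinj, by simp [ZMod.card]⟩
  obtain ⟨i, hi⟩ := hbij.2 x
  exact ⟨i.val, i.isLt, hi.symm⟩

lemma aux_core (n m t c : ℕ) (hm : 3 ≤ m) (hnm : 2*m ≤ n) (ht : t < n) (ht1 : t ≠ 1)
    (H1 : ∀ b, 1 ≤ b → b ≤ m → (1 ≤ b*t % n ∧ b*t % n ≤ m-1) ∨ b*t % n = c)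
    (H2 : ∀ k, 1 ≤ k → k ≤ m-1 → ∃ b, 1 ≤ b ∧ b ≤ m ∧ b*t % n = k) : False := by
  have hn6 : 6 ≤ n := by omega
  have small : ∀ x y : ℕ, x < n → y < n → x ≡ y [MOD n] → x = y := by
    intro x y hx hy hxy
    rwa [Nat.ModEq, Nat.mod_eq_of_lt hx, Nat.mod_eq_of_lt hy] at hxy
  have toM : ∀ x v : ℕ, v < n → x % n = v → x ≡ v [MOD n] := by
    intro x v hv hx
    rw [Nat.ModEq, Nat.mod_eq_of_lt hv]; exact hx
  obtain ⟨b1, hb11, hb1m, hb1⟩ := H2 1 le_rfl (by omega)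
  obtain ⟨b2, hb21, hb2m, hb2⟩ := H2 2 (by omega) (by omega)
  have m1 : b1 * t ≡ 1 [MOD n] := toM _ _ (by omega) hb1
  have m2 : b2 * t ≡ 2 [MOD n] := toM _ _ (by omega) hb2
  have cancel : ∀ x y : ℕ, x * t ≡ y * t [MOD n] → x ≡ y [MOD n] := by
    intro x y hxy
    calc x = x * 1 := by ring
    _ ≡ x * (b1 * t) [MOD n] := (Nat.ModEq.mul_left x m1).symm
    _ = (x * t) * b1 := by ring
    _ ≡ (y * t) * b1 [MOD n] := hxy.mul_right b1
    _ = y * (b1 * t) := by ring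
    _ ≡ y * 1 [MOD n] := Nat.ModEq.mul_left y m1
    _ = y := by ring
  have hb12 : b1 ≠ b2 := by
    intro hEq
    have : (1:ℕ) = 2 := small _ _ (by omega) (by omega) (m1.symm.trans (hEq ▸ m2))
    omega
  have ht0 : t ≠ 0 := by
    intro h0
    have : (0:ℕ) = 1 := small _ _ (by omega) (by omega) (by simpa [h0] using m1)
    omega
  rcases Nat.lt_or_ge b1 b2 with hlt | hge
  · -- increasing case: e * t ≡ 1
    set e := b2 - b1 with hedef
    have he1 : 1 ≤ e := by omega
    have hem : e ≤ m - 1 := by omega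
    have he : e * t ≡ 1 [MOD n] := by
      have h1 : e*t + 1 ≡ 1 + 1 [MOD n] := by
        calc e*t + 1 ≡ e*t + b1*t [MOD n] := Nat.ModEq.add_left _ m1.symm
        _ = b2 * t := by rw [← add_mul]; congr 1; omega
        _ ≡ 2 [MOD n] := m2
      exact h1.add_right_cancel' 1
    have chain : ∀ k, k + 1 ≤ m - 1 → ∀ b, 1 ≤ b → b ≤ m → b*t ≡ k + 1 [MOD n] →
        b = b1 + k * e := by
      intro k
      induction k with
      | zero =>
        intro _ b hb1' hbm hbt
        have : b ≡ b1 [MOD n] := cancel _ _ (hbt.trans m1.symm)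
        have := small _ _ (by omega) (by omega) this
        omega
      | succ k ih =>
        intro hk b hb1' hbm hbt
        obtain ⟨b', hb'1, hb'm, hb'⟩ := H2 (k+1) (by omega) (by omega)
        have hb'M : b' * t ≡ k + 1 [MOD n] := toM _ _ (by omega) hb'
        have hb'e : b' = b1 + k * e := ih (by omega) b' hb'1 hb'm hb'M
        have hstep : (b' + e) * t ≡ (k + 1) + 1 [MOD n] := by
          calc (b' + e) * t = b'*t + e*t := by ring
          _ ≡ (k+1) + 1 [MOD n] := Nat.ModEq.add hb'M he
        have : b ≡ b' + e [MOD n] := cancel _ _ (hbt.trans hstep.symm)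
        have hbeq := small _ _ (by omega) (by omega) this
        have : (k+1) * e = k * e + e := by ring
        omega
    obtain ⟨b3, hb31, hb3m, hb3⟩ := H2 (m-1) (by omega) (by omega)
    have hb3e : b3 = b1 + (m - 2) * e := by
      apply chain (m-2) (by omega) b3 hb31 hb3m
      exact toM _ _ (by omega) (by rw [hb3]; omega)
    have hee : e = 1 ∨ (m = 3 ∧ e = 2) := by
      by_cases h1 : e = 1
      · exact Or.inl h1
      · have h2 : 2 ≤ e := by omega
        have := Nat.mul_le_mul_left (m-2) h2
        right
        constructor <;> omega
    rcases hee with h1 | ⟨hm3, he2⟩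
    · exact ht1 (small _ _ ht (by omega) (by simpa [h1] using he))
    · -- m = 3, 2t ≡ 1 [MOD n]
      have h2t : 2 * t ≡ 1 [MOD n] := by rwa [he2] at he
      have hH11 := H1 1 le_rfl (by omega)
      rw [one_mul, Nat.mod_eq_of_lt ht] at hH11
      have htc : t = c := by
        rcases hH11 with ⟨_, h⟩ | h
        · -- t ≤ m - 1 = 2
          have ht12 : t = 1 ∨ t = 2 := by omega
          rcases ht12 with h' | h'
          · exact absurd h' ht1
          · subst h'
            have : (4:ℕ) = 1 := small _ _ (by omega) (by omega) h2t
            omega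
        · exact h
      have hH13 := H1 3 (by omega) (by omega)
      have h3t : 3 * t ≡ t + 1 [MOD n] := by
        calc 3 * t = t + 2 * t := by ring
        _ ≡ t + 1 [MOD n] := Nat.ModEq.add_left t h2t
      have hv : (3*t) % n < n := Nat.mod_lt _ (by omega)
      have hvM : t + 1 ≡ (3*t) % n [MOD n] := h3t.symm.trans (toM _ _ hv rfl)
      rcases hH13 with ⟨hv1, hv2⟩ | hvc
      · -- t + 1 ≡ v with 1 ≤ v ≤ 2
        rcases Nat.lt_or_ge (t+1) n with hlt' | hge'
        · have := small _ _ hlt' hv hvM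
          have ht2 : t ≤ 1 := by omega
          interval_cases t
          · have : (0:ℕ) = 1 := small _ _ (by omega) (by omega) (by simpa using h2t)
            omega
          · exact ht1 rfl
        · have hn' : t + 1 = n := by omega
          have h0 : (3*t) % n = 0 := by
            have hcopy := hvM
            rw [Nat.ModEq, hn', Nat.mod_self, Nat.mod_eq_of_lt hv] at hcopy
            omega
          omega
      · -- (3t)%n = c = t : t+1 ≡ t
        have : t + 1 ≡ t + 0 [MOD n] := by
          simpa [hvc, ← htc] using hvM
        have h10 : (1:ℕ) ≡ 0 [MOD n] := (Nat.ModEq.add_left_cancel' t this)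
        have := small _ _ (by omega) (by omega) h10
        omega
  · -- decreasing case: e * t + 1 ≡ 0
    have hlt : b2 < b1 := by omega
    set e := b1 - b2 with hedef
    have he1 : 1 ≤ e := by omega
    have hem : e ≤ m - 1 := by omega
    have he : e * t + 1 ≡ 0 [MOD n] := by
      have h1 : (e*t + 1) + 1 ≡ 0 + 1 [MOD n] := by
        calc (e*t + 1) + 1 = e*t + 2 := by ring
        _ ≡ e*t + b2*t [MOD n] := Nat.ModEq.add_left _ m2.symm
        _ = b1 * t := by rw [← add_mul]; congr 1; omega
        _ ≡ 1 [MOD n] := m1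
        _ = 0 + 1 := by ring
      exact h1.add_right_cancel' 1
    have chain : ∀ k, k + 1 ≤ m - 1 → ∀ b, 1 ≤ b → b ≤ m → b*t ≡ k + 1 [MOD n] →
        b + k * e = b1 := by
      intro k
      induction k with
      | zero =>
        intro _ b hb1' hbm hbt
        have : b ≡ b1 [MOD n] := cancel _ _ (hbt.trans m1.symm)
        have := small _ _ (by omega) (by omega) this
        omega
      | succ k ih =>
        intro hk b hb1' hbm hbt
        obtain ⟨b', hb'1, hb'm, hb'⟩ := H2 (k+1) (by omega) (by omega)
        have hb'M : b' * t ≡ k + 1 [MOD n] := toM _ _ (by omega) hb'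
        have hb'e : b' + k * e = b1 := ih (by omega) b' hb'1 hb'm hb'M
        have hstep : (b + e) * t + 1 ≡ (k + 1) + 1 [MOD n] := by
          calc (b + e) * t + 1 = b*t + (e*t + 1) := by ring
          _ ≡ ((k+1)+1) + 0 [MOD n] := Nat.ModEq.add hbt he
          _ = (k+1) + 1 := by ring
        have hbe : (b + e) * t ≡ k + 1 [MOD n] := hstep.add_right_cancel' 1
        have : b + e ≡ b' [MOD n] := cancel _ _ (hbe.trans hb'M.symm)
        have hbeq := small _ _ (by omega) (by omega) this
        have : (k+1) * e = k * e + e := by ring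
        omega
    obtain ⟨b3, hb31, hb3m, hb3⟩ := H2 (m-1) (by omega) (by omega)
    have hb3e : b3 + (m - 2) * e = b1 := by
      apply chain (m-2) (by omega) b3 hb31 hb3m
      exact toM _ _ (by omega) (by rw [hb3]; omega)
    have hee : e = 1 ∨ (m = 3 ∧ e = 2) := by
      by_cases h1 : e = 1
      · exact Or.inl h1
      · have h2 : 2 ≤ e := by omega
        have := Nat.mul_le_mul_left (m-2) h2
        right
        constructor <;> omega
    rcases hee with h1 | ⟨hm3, he2⟩
    · -- t + 1 ≡ 0, so t = n - 1
      have htn1 : t = n - 1 := by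
        have h' : (t + 1) % n = 0 := by simpa [h1, Nat.ModEq] using he
        rcases Nat.lt_or_ge (t+1) n with hlt' | hge'
        · rw [Nat.mod_eq_of_lt hlt'] at h'; omega
        · omega
      have hH11 := H1 1 le_rfl (by omega)
      rw [one_mul, Nat.mod_eq_of_lt ht] at hH11
      have hc1 : c = n - 1 := by
        rcases hH11 with ⟨_, h⟩ | h <;> omega
      have h2m : (2*t) % n = n - 2 := by
        have h2tv : 2*t = n + (n - 2) := by omega
        rw [h2tv, Nat.add_mod_left, Nat.mod_eq_of_lt (by omega)]
      have hH12 := H1 2 (by omega) (by omega)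
      rw [h2m] at hH12
      rcases hH12 with ⟨_, h⟩ | h <;> omega
    · -- m = 3, 2t + 1 ≡ 0
      have h2t : 2 * t + 1 ≡ 0 [MOD n] := by rwa [he2] at he
      have h2tn : 2*t + 1 = n := by
        have h' : (2*t + 1) % n = 0 := by simpa [Nat.ModEq] using h2t
        rcases Nat.lt_or_ge (2*t+1) n with hlt' | hge'
        · rw [Nat.mod_eq_of_lt hlt'] at h'; omega
        · have h2 : (2*t+1) % n = 2*t + 1 - n := by
            rw [Nat.mod_eq_sub_mod hge', Nat.mod_eq_of_lt (by omega)]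
          omega
      have h2m : (2*t) % n = n - 1 := by rw [Nat.mod_eq_of_lt (by omega)]; omega
      have hH12 := H1 2 (by omega) (by omega)
      rw [h2m, hm3] at hH12
      have hc : c = n - 1 := by rcases hH12 with ⟨_, h⟩ | h <;> omega
      have hH11 := H1 1 le_rfl (by omega)
      rw [one_mul, Nat.mod_eq_of_lt ht, hm3, hc] at hH11
      rcases hH11 with ⟨_, h⟩ | h <;> omega
theorem stmt_7 (n : ℕ) (hn : 1 ≤ n) (g h : ZMod n) (hg : addOrderOf g = n)
    (l : ℕ) (hl1 : 1 ≤ n - l) (hl2 : n - l ≤ l) (hln : l ≤ n)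
    (S : Multiset (ZMod n))
    (hS : S = Multiset.replicate l g + Multiset.replicate (n - l) h)
    (b₀ : ZMod n)
    (hsums : {x : ZMod n | ∃ k : ℕ, 1 ≤ k ∧ k ≤ n - l ∧ x = k • h} =
      {x : ZMod n | ∃ k : ℕ, 1 ≤ k ∧ k ≤ n - l - 1 ∧ x = k • g} ∪ {b₀})
    (huniq : ∃! r : ℕ, r ∈ Finset.Icc 1 n ∧
      ∃ T ≤ S, Multiset.card T = r ∧ T.sum = 0) :
    S = Multiset.replicate (n - 1) g + {h} ∨
      (Odd n ∧ h = ((n + 1) / 2) • g ∧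
        S = Multiset.replicate (n - 2) g + Multiset.replicate 2 h) := by
  have hn2 : 2 ≤ n := by omega
  obtain ⟨t, htn, hht⟩ := aux_log (by omega) hg h
  by_cases htt : t = 1
  · -- h = g : left disjunct
    subst htt
    rw [one_nsmul] at hht
    left
    rw [hS, hht, ← Multiset.replicate_one (a := g), ← Multiset.replicate_add,
      ← Multiset.replicate_add]
    congr 1
    omega
  · have hne : h ≠ g := by
      intro hEq
      apply htt
      have : t • g = 1 • g := by rw [← hht, hEq, one_nsmul]
      exact aux_nsmul_inj hg htn (by omega) this
    have hcase : n - l = 1 ∨ n - l = 2 ∨ 3 ≤ n - l := by omega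
    rcases hcase with h1 | h2 | h3
    · -- m = 1 : left
      left
      rw [hS, h1, show l = n - 1 by omega, Multiset.replicate_one]
    · -- m = 2 : right
      have hgmem : ∃ k : ℕ, 1 ≤ k ∧ k ≤ n - l ∧ g = k • h := by
        have hmem : g ∈ {x : ZMod n | ∃ k : ℕ, 1 ≤ k ∧ k ≤ n - l - 1 ∧ x = k • g} ∪ {b₀} :=
          Or.inl ⟨1, le_rfl, by omega, (one_nsmul g).symm⟩
        rw [← hsums] at hmem
        exact hmem
      obtain ⟨k, hk1, hk2, hgk⟩ := hgmem
      rw [h2] at hk2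
      have hk : k = 2 := by
        rcases (by omega : k = 1 ∨ k = 2) with h' | h'
        · rw [h', one_nsmul] at hgk
          exact absurd hgk.symm hne
        · exact h'
      subst hk
      have hg2 : g = 2 • h := hgk
      have hodd : Odd n := by
        rcases Nat.even_or_odd n with hev | hod
        · exfalso
          obtain ⟨j, hj⟩ := hev
          have hnh : n • h = 0 := by rw [nsmul_eq_mul, ZMod.natCast_self, zero_mul]
          have hjg : j • g = 0 := by
            rw [hg2, ← mul_smul, show j * 2 = n by omega, hnh]
          have hdvd : n ∣ j := by rw [← hg]; exact addOrderOf_dvd_of_nsmul_eq_zero hjg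
          have := Nat.le_of_dvd (by omega) hdvd
          omega
        · exact hod
      have h2t : (2 * t) % n = 1 := by
        have : ((2 * t) % n) • g = 1 • g := by
          rw [one_nsmul, ← aux_reduce hg, mul_smul, ← hht, ← hg2]
        exact aux_nsmul_inj hg (Nat.mod_lt _ (by omega)) (by omega) this
      obtain ⟨j, hj⟩ := hodd
      have htval : t = j + 1 := by
        rcases Nat.lt_or_ge (2 * t) n with h' | h'
        · rw [Nat.mod_eq_of_lt h'] at h2t
          omega
        · have hsub : (2 * t) % n = 2 * t - n := by
            rw [Nat.mod_eq_sub_mod h', Nat.mod_eq_of_lt (by omega)]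
          omega
      right
      refine ⟨⟨j, hj⟩, ?_, ?_⟩
      · rw [hht, htval]
        congr 1
        omega
      · rw [hS, h2, show l = n - 2 by omega]
    · -- m ≥ 3 : contradiction
      exfalso
      obtain ⟨c, hcn, hbc⟩ := aux_log (by omega) hg b₀
      have smulform : ∀ b : ℕ, b • h = ((b * t) % n) • g := by
        intro b
        rw [hht, ← mul_smul, aux_reduce hg]
      apply aux_core n (n - l) t c h3 (by omega) htn htt
      · -- H1
        intro b hb1 hbm
        have hmem : (b • h) ∈ {x : ZMod n | ∃ k : ℕ, 1 ≤ k ∧ k ≤ n - l ∧ x = k • h} :=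
          ⟨b, hb1, hbm, rfl⟩
        rw [hsums] at hmem
        rcases hmem with ⟨k, hk1, hkm, hkeq⟩ | hbe
        · left
          have : ((b * t) % n) • g = k • g := by rw [← smulform, hkeq]
          have hek := aux_nsmul_inj hg (Nat.mod_lt _ (by omega)) (by omega) this
          omega
        · right
          have hbe' : b • h = b₀ := hbe
          have : ((b * t) % n) • g = c • g := by rw [← smulform, hbe', hbc]
          exact aux_nsmul_inj hg (Nat.mod_lt _ (by omega)) hcn this
      · -- H2
        intro k hk1 hkm
        have hmem : (k • g) ∈ {x : ZMod n | ∃ k : ℕ, 1 ≤ k ∧ k ≤ n - l - 1 ∧ x = k • g} ∪ {b₀} :=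
          Or.inl ⟨k, hk1, hkm, rfl⟩
        rw [← hsums] at hmem
        obtain ⟨b, hb1, hbm, hbeq⟩ := hmem
        refine ⟨b, hb1, hbm, ?_⟩
        have : ((b * t) % n) • g = k • g := by rw [← smulform, ← hbeq]
        exact aux_nsmul_inj hg (Nat.mod_lt _ (by omega)) (by omega) this
end

section
/- Let G be an abelian group of even order n, let g, h ∈ G with ord(g) = n/2 and h ≠ g, and let S = g^l h^{n-l} with n - l ≥ 2 and l ≥ n/2. If n/2 is the unique integer r ∈ [1, n] such that some sub-multiset of S of size r sums to zero, then n - l is odd, h ∉ ⟨g⟩, and 2h = 2g. -/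
theorem stmt_8 {G : Type*} [AddCommGroup G] [Fintype G]
    (n : ℕ) (hn : Fintype.card G = n) (hneven : Even n)
    (g h : G) (hg : addOrderOf g = n / 2) (hgh : h ≠ g)
    (l : ℕ) (hl1 : 2 ≤ n - l) (hl2 : n / 2 ≤ l)
    (S : Multiset G)
    (hS : S = Multiset.replicate l g + Multiset.replicate (n - l) h)
    (huniq : ∀ r ∈ Finset.Icc 1 n,
      ((∃ T ≤ S, Multiset.card T = r ∧ T.sum = 0) ↔ r = n / 2)) :
    Odd (n - l) ∧ h ∉ AddSubgroup.zmultiples g ∧ 2 • h = 2 • g := by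
  set m := n / 2 with hm
  obtain ⟨t, ht⟩ := hneven
  have hn2 : n = 2 * m := by omega
  have hm2 : 2 ≤ m := by omega
  have hmg : m • g = 0 := by rw [← hg]; exact addOrderOf_nsmul_eq_zero g
  -- key: any zero-sum combination forces size m
  have key : ∀ a b : ℕ, a ≤ l → b ≤ n - l → 1 ≤ a + b → a + b ≤ n →
      a • g + b • h = 0 → a + b = m := by
    intro a b ha hb h1 h2 hsum
    refine (huniq (a + b) (Finset.mem_Icc.mpr ⟨h1, h2⟩)).mp ?_
    refine ⟨Multiset.replicate a g + Multiset.replicate b h, ?_, ?_, ?_⟩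
    · rw [hS]
      exact add_le_add ((Multiset.replicate_le_replicate g).mpr ha)
        ((Multiset.replicate_le_replicate h).mpr hb)
    · simp
    · simpa using hsum
  -- reduce an element of zmultiples g to c • g with c < m
  have reduce : ∀ x : G, x ∈ AddSubgroup.zmultiples g → ∃ c : ℕ, c < m ∧ c • g = x := by
    intro x hx
    obtain ⟨k, hk⟩ := AddSubgroup.mem_zmultiples_iff.mp hx
    have hmpos : (0:ℤ) < (m:ℤ) := by exact_mod_cast (by omega : 0 < m)
    have hlt : k % (m:ℤ) < (m:ℤ) := Int.emod_lt_of_pos k hmpos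
    have hge : (0:ℤ) ≤ k % (m:ℤ) := Int.emod_nonneg k (by omega)
    refine ⟨(k % (m:ℤ)).toNat, by omega, ?_⟩
    have hmzg : (m:ℤ) • g = 0 := by rw [natCast_zsmul]; exact hmg
    have : (k % (m:ℤ)) • g = k • g := by
      conv_rhs => rw [← Int.emod_add_mul_ediv k (m:ℤ)]
      rw [add_zsmul, mul_comm, mul_zsmul, hmzg, smul_zero, add_zero]
    rw [← hk, ← this, ← natCast_zsmul, Int.toNat_of_nonneg hge]
  -- h is not in ⟨g⟩
  have hnotin : h ∉ AddSubgroup.zmultiples g := by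
    intro hx
    obtain ⟨c, hc, hcg⟩ := reduce h hx
    rcases Nat.eq_zero_or_pos c with rfl | hcpos
    · have h0 : h = 0 := by simpa using hcg.symm
      have := key 0 1 (by omega) (by omega) (by omega) (by omega)
        (by simp [h0])
      omega
    · have hsum : (m - c) • g + 1 • h = 0 := by
        rw [one_nsmul, ← hcg, ← add_nsmul, Nat.sub_add_cancel hc.le, hmg]
      have hkey := key (m - c) 1 (by omega) (by omega) (by omega) (by omega) hsum
      have hc1 : c = 1 := by omega
      exact hgh (by rw [← hcg, hc1, one_nsmul])
  -- 2 • h ∈ ⟨g⟩ since the quotient has order 2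
  have h2mem : 2 • h ∈ AddSubgroup.zmultiples g := by
    have hcards : Nat.card (AddSubgroup.zmultiples g) = m := by
      rw [Nat.card_zmultiples, hg]
    have hidx : (AddSubgroup.zmultiples g).index = 2 := by
      have := AddSubgroup.index_mul_card (AddSubgroup.zmultiples g)
      rw [hcards, Nat.card_eq_fintype_card, hn, hn2] at this
      have hmne : m ≠ 0 := by omega
      exact Nat.eq_of_mul_eq_mul_right (by omega) this
    have := AddSubgroup.nsmul_index_mem (AddSubgroup.zmultiples g) h
    rwa [hidx] at this
  obtain ⟨d, hd, hdg⟩ := reduce (2 • h) h2mem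
  have h2h : 2 • h = 2 • g := by
    rcases Nat.eq_zero_or_pos d with rfl | hdpos
    · have h0 : 2 • h = 0 := by simpa using hdg.symm
      have hkey := key 0 2 (by omega) (by omega) (by omega) (by omega) (by simp [h0])
      have h2g : 2 • g = 0 := by rw [show (2:ℕ) = m from by omega]; exact hmg
      rw [h0, h2g]
    · have hsum : (m - d) • g + 2 • h = 0 := by
        rw [← hdg, ← add_nsmul, Nat.sub_add_cancel hd.le, hmg]
      have hkey := key (m - d) 2 (by omega) (by omega) (by omega) (by omega) hsum
      have hd2 : d = 2 := by omega
      rw [← hdg, hd2]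
  refine ⟨?_, hnotin, h2h⟩
  by_contra hcon
  rw [Nat.not_odd_iff_even] at hcon
  obtain ⟨b', hb'⟩ := hcon
  have hln : l ≤ n := by omega
  have hhg : (n - l) • h = (n - l) • g := by
    rw [hb', add_nsmul, add_nsmul, ← nsmul_add, ← nsmul_add, ← two_nsmul, h2h, two_nsmul]
  have hsum : l • g + (n - l) • h = 0 := by
    rw [hhg, ← add_nsmul, Nat.add_sub_cancel' hln, hn2, mul_comm, mul_nsmul, hmg, smul_zero]
  have hkey := key l (n - l) le_rfl le_rfl (by omega) (by omega) hsum
  omega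
end

section
/- Let G be a finite abelian group with a nontrivial proper subgroup H such that 2|H| < |G|, and let S be a sequence over G of length |G| containing an element g with ord(g) = |H|, g generating H, multiplicity of g in S at least |H|, and g the only element of H in supp(S). Then S has a zero-sum subsequence of length strictly greater than |H|. -/
open Multiset

private lemma seg_lemma {G Q : Type*} [AddCommGroup G] [AddCommGroup Q]
    (π : G →+ Q) (l : List G) {i j : ℕ} (hij : i < j) (hj : j ≤ l.length)
    (heq : ((l.take i).map π).sum = ((l.take j).map π).sum) :
    ∃ B ≤ (l : Multiset G), B ≠ 0 ∧ (B.map π).sum = 0 := by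
  refine ⟨((l.drop i).take (j - i) : List G), ?_, ?_, ?_⟩
  · exact Multiset.coe_le.2 (((l.drop i).take_sublist _).trans (l.drop_sublist i)).subperm
  · have hlen : ((l.drop i).take (j - i)).length = j - i := by
      rw [List.length_take, List.length_drop]; omega
    intro h
    have h2 := congrArg Multiset.card h
    rw [Multiset.coe_card, hlen, Multiset.card_zero] at h2
    omega
  · have hji : i + (j - i) = j := by omega
    have hsplit : l.take j = l.take i ++ (l.drop i).take (j - i) := by
      have h : l.take (i + (j - i)) = l.take i ++ (l.drop i).take (j - i) := List.take_add; rwa [hji] at h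
    rw [hsplit, List.map_append, List.sum_append] at heq
    have h0 : (((l.drop i).take (j - i)).map π).sum = 0 := (left_eq_add.mp heq)
    simpa using h0

/-- Davenport bound. -/
lemma exists_zero_sum_map {G Q : Type*} [AddCommGroup G] [AddCommGroup Q] [Finite Q]
    (π : G →+ Q) (A : Multiset G) (hA : Nat.card Q ≤ Multiset.card A) :
    ∃ B ≤ A, B ≠ 0 ∧ (B.map π).sum = 0 := by
  cases nonempty_fintype Q
  rw [Nat.card_eq_fintype_card] at hA
  induction A using Quotient.inductionOn with
  | h l =>
    rw [quot_mk_to_coe, Multiset.coe_card] at hA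
    have hcard : Fintype.card Q < Fintype.card (Fin (l.length + 1)) := by
      simpa using Nat.lt_succ_of_le hA
    obtain ⟨i, j, hij, hfeq⟩ := Fintype.exists_ne_map_eq_of_card_lt
      (fun i : Fin (l.length + 1) => (((l.take i).map π).sum)) hcard
    rcases lt_or_gt_of_ne (Fin.val_ne_of_ne hij) with h | h
    · exact seg_lemma π l h (by omega) hfeq
    · exact seg_lemma π l h (by omega) hfeq.symm

/-- Iterated extraction. -/
lemma exists_big_zero_sum_map {G Q : Type*} [AddCommGroup G] [DecidableEq G] [AddCommGroup Q] [Finite Q]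
    (π : G →+ Q) (A : Multiset G) :
    ∃ U ≤ A, (U.map π).sum = 0 ∧ Multiset.card A < Multiset.card U + Nat.card Q := by
  have hQ : 1 ≤ Nat.card Q := Nat.card_pos
  induction A using Multiset.strongInductionOn with
  | ih A ih =>
    by_cases hA : Multiset.card A < Nat.card Q
    · exact ⟨0, Multiset.zero_le A, by simp, by simpa using hA⟩
    · push_neg at hA
      obtain ⟨B, hBA, hB0, hBsum⟩ := exists_zero_sum_map π A hA
      have hcardB : 0 < Multiset.card B := Multiset.card_pos.2 hB0
      have hcardle := Multiset.card_le_card hBA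
      have hcard : Multiset.card (A - B) < Multiset.card A := by
        rw [Multiset.card_sub hBA]; omega
      have hlt : A - B < A :=
        lt_of_le_of_ne (Multiset.sub_le_self A B) (fun h => by rw [h] at hcard; omega)
      obtain ⟨U', hU', hUsum, hUcard⟩ := ih (A - B) hlt
      refine ⟨U' + B, ?_, ?_, ?_⟩
      · calc U' + B ≤ (A - B) + B := add_le_add_left hU' B
          _ = A := tsub_add_cancel_of_le hBA
      · rw [Multiset.map_add, Multiset.sum_add, hUsum, hBsum, add_zero]
      · have h1 : Multiset.card (A - B) + Multiset.card B = Multiset.card A := by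
          rw [← Multiset.card_add, tsub_add_cancel_of_le hBA]
        rw [Multiset.card_add]
        omega

theorem stmt_12 {G : Type*} [AddCommGroup G] [Fintype G] [DecidableEq G]
    (H : AddSubgroup G) (hbot : H ≠ ⊥) (htop : H ≠ ⊤)
    (hsmall : 2 * Nat.card H < Fintype.card G)
    (S : Multiset G) (hS : Multiset.card S = Fintype.card G)
    (g : G) (hord : addOrderOf g = Nat.card H)
    (hgen : AddSubgroup.zmultiples g = H)
    (hmult : Nat.card H ≤ S.count g)
    (honly : ∀ x ∈ S, x ∈ H → x = g) :
    ∃ T : Multiset G, T ≤ S ∧ T ≠ 0 ∧ T.sum = 0 ∧ Nat.card H < Multiset.card T := by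
  classical
  set n := Fintype.card G with hn
  set k := Nat.card H with hk
  set m := Nat.card (G ⧸ H) with hm
  have hk2 : 2 ≤ k := (AddSubgroup.one_lt_card_iff_ne_bot H).mpr hbot
  have hkm : m * k = n := by
    rw [hm, hk, hn, ← AddSubgroup.index_eq_card, AddSubgroup.index_mul_card,
      Nat.card_eq_fintype_card]
  have hm3 : 3 ≤ m := by
    by_contra h
    push_neg at h
    have h2 : m * k ≤ 2 * k := Nat.mul_le_mul_right k (by omega)
    rw [hkm] at h2
    omega
  -- the multiset without k copies of g
  have hrep : Multiset.replicate k g ≤ S := Multiset.le_count_iff_replicate_le.mp hmult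
  set S' := S - Multiset.replicate k g with hS'
  have hcardS' : Multiset.card S' = n - k := by
    rw [hS', Multiset.card_sub hrep, Multiset.card_replicate, hS]
  -- extract a large zero-sum-mod-H subsequence
  set π := QuotientAddGroup.mk' H with hπ
  obtain ⟨U, hUle, hUsum, hUcard⟩ := exists_big_zero_sum_map π S'
  rw [hcardS', ← hm] at hUcard
  -- the sum of U lies in H
  have hUH : U.sum ∈ H := by
    have hps : π U.sum = 0 := by rw [map_multiset_sum]; exact hUsum
    exact (QuotientAddGroup.eq_zero_iff _).mp hps
  obtain ⟨z, hz⟩ := AddSubgroup.mem_zmultiples_iff.mp (hgen ▸ neg_mem hUH)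
  -- k • g = 0
  have hkg : k • g = 0 := by rw [← hord]; exact addOrderOf_nsmul_eq_zero g
  have hzkg : (k : ℤ) • g = 0 := by rw [natCast_zsmul]; exact hkg
  have hkpos : 0 < k := by omega
  set t0 := (z % (k : ℤ)).toNat with ht0
  have hmodlt : z % (k : ℤ) < k := Int.emod_lt_of_pos z (by exact_mod_cast hkpos)
  have hmodnn : 0 ≤ z % (k : ℤ) := Int.emod_nonneg z (by exact_mod_cast hkpos.ne')
  have ht0k : t0 < k := by omega
  have ht0g : t0 • g = -U.sum := by
    have h1 : ((t0 : ℤ)) • g = (z % (k : ℤ)) • g := by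
      rw [ht0, Int.toNat_of_nonneg hmodnn]
    have h2 : (z % (k : ℤ)) • g = z • g := by
      conv_rhs => rw [← Int.emod_add_mul_ediv z (k : ℤ)]
      rw [add_zsmul, mul_comm, mul_zsmul, hzkg, smul_zero, add_zero]
    rw [← natCast_zsmul, h1, h2, hz]
  set t := if t0 = 0 then k else t0 with ht
  have ht1 : 1 ≤ t := by rw [ht]; split <;> omega
  have htk : t ≤ k := by rw [ht]; split <;> omega
  have htg : t • g = -U.sum := by
    rw [ht]
    split
    · rename_i h0
      rw [h0] at ht0g
      simp only [zero_smul] at ht0g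
      rw [hkg, ht0g]
    · exact ht0g
  refine ⟨U + Multiset.replicate t g, ?_, ?_, ?_, ?_⟩
  · rw [Multiset.le_iff_count]
    intro a
    have hc := Multiset.count_le_of_le a hUle
    rw [hS', Multiset.count_sub, Multiset.count_replicate] at hc
    rw [Multiset.count_add, Multiset.count_replicate]
    by_cases hag : g = a
    · rw [if_pos hag] at hc ⊢
      subst hag
      omega
    · rw [if_neg hag] at hc ⊢
      omega
  · intro h
    have hcard := congrArg Multiset.card h
    rw [Multiset.card_add, Multiset.card_replicate, Multiset.card_zero] at hcard
    omega
  · rw [Multiset.sum_add, Multiset.sum_replicate, htg, add_neg_cancel]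
  · rw [Multiset.card_add, Multiset.card_replicate]
    have keygen : ∀ a b : ℕ, 2 ≤ a → 3 ≤ b → 2 * a + b ≤ b * a + 1 := by
      intro a b ha hb
      obtain ⟨a', rfl⟩ : ∃ a', a = a' + 2 := ⟨a - 2, by omega⟩
      obtain ⟨b', rfl⟩ : ∃ b', b = b' + 3 := ⟨b - 3, by omega⟩
      nlinarith
    have key : 2 * k + m ≤ n + 1 := by
      have h := keygen k m hk2 hm3
      rw [hkm] at h
      exact h
    omega
end

section
/- Let G be an abelian group, g ∈ G a generator of G with |G| = n, and suppose S = g^{n-1}g' for some g' ∈ G. Then all nonempty zero-sum subsequences of S have the same length. (If g' = kg with k ∈ [1,n], the unique zero-sum length is n - k + 1.) -/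
lemma decomp13 {α : Type*} (a b : α) (m : ℕ) (T : Multiset α)
    (h : T ≤ Multiset.replicate m a + {b}) :
    (∃ j ≤ m, T = Multiset.replicate j a) ∨
    (∃ j ≤ m, T = Multiset.replicate j a + {b}) := by
  classical
  by_cases hb : b ∈ T
  · right
    have h2 : T.erase b ≤ (Multiset.replicate m a + {b}).erase b :=
      Multiset.erase_le_erase b h
    have he : (Multiset.replicate m a + {b}).erase b = Multiset.replicate m a := by
      rw [Multiset.erase_add_right_pos _ (by simp)]
      simp
    rw [he] at h2
    have hall : ∀ x ∈ T.erase b, x = a := fun x hx =>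
      Multiset.eq_of_mem_replicate (Multiset.mem_of_le h2 hx)
    have heq : T.erase b = Multiset.replicate (Multiset.card (T.erase b)) a :=
      (Multiset.eq_replicate_card).mpr hall
    refine ⟨Multiset.card (T.erase b), ?_, ?_⟩
    · calc Multiset.card (T.erase b) ≤ Multiset.card (Multiset.replicate m a) :=
            Multiset.card_le_card h2
        _ = m := by simp
    · conv_lhs => rw [← Multiset.cons_erase hb]
      rw [heq, ← Multiset.singleton_add, add_comm]
      simp
  · left
    have hall : ∀ x ∈ T, x = a := by
      intro x hx
      have hx2 := Multiset.mem_of_le h hx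
      simp only [Multiset.mem_add, Multiset.mem_replicate, Multiset.mem_singleton] at hx2
      rcases hx2 with ⟨-, rfl⟩ | rfl
      · rfl
      · exact absurd hx hb
    have heq : T = Multiset.replicate (Multiset.card T) a :=
      (Multiset.eq_replicate_card).mpr hall
    refine ⟨Multiset.card T, ?_, heq⟩
    by_cases hab : a = b
    · subst hab
      have hT0 : T = 0 := by
        rcases Multiset.empty_or_exists_mem T with h0 | ⟨x, hx⟩
        · exact h0
        · exact absurd (hall x hx ▸ hx) hb
      simp [hT0]
    · have hT2 : T ≤ Multiset.replicate m a := by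
        rw [Multiset.le_iff_count]
        intro x
        by_cases hx : x = a
        · subst hx
          have := Multiset.count_le_of_le x h
          simpa [Multiset.count_singleton, hab] using this
        · rw [heq]
          simp [Multiset.count_replicate, Ne.symm hx]
      simpa using Multiset.card_le_card hT2

theorem stmt_13 {G : Type*} [AddCommGroup G] [Fintype G] (n : ℕ)
    (hn : Fintype.card G = n) (g g' : G) (hg : AddSubgroup.zmultiples g = ⊤)
    (S : Multiset G) (hS : S = Multiset.replicate (n - 1) g + {g'}) :
    (∃ r : ℕ, ∀ T : Multiset G, T ≤ S → T ≠ 0 → T.sum = 0 →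
        Multiset.card T = r) ∧
      ∀ k : ℕ, 1 ≤ k → k ≤ n → g' = k • g →
        ∀ T : Multiset G, T ≤ S → T ≠ 0 → T.sum = 0 →
          Multiset.card T = n - k + 1 := by
  classical
  have hn1 : 1 ≤ n := hn ▸ Fintype.card_pos
  have hord : addOrderOf g = n := by
    rw [← hn, ← Nat.card_eq_fintype_card]
    exact addOrderOf_eq_card_of_forall_mem_zmultiples
      (fun x => hg ▸ AddSubgroup.mem_top x)
  have key : ∀ k : ℕ, 1 ≤ k → k ≤ n → g' = k • g →
      ∀ T : Multiset G, T ≤ S → T ≠ 0 → T.sum = 0 →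
        Multiset.card T = n - k + 1 := by
    intro k hk1 hkn hk T hT hT0 hTs
    rw [hS] at hT
    rcases decomp13 g g' (n-1) T hT with ⟨j, hj, rfl⟩ | ⟨j, hj, rfl⟩
    · exfalso
      have hs : j • g = 0 := by simpa using hTs
      have hdvd : n ∣ j := hord ▸ addOrderOf_dvd_of_nsmul_eq_zero hs
      have hj0 : j ≠ 0 := by rintro rfl; simp at hT0
      have := Nat.le_of_dvd (Nat.pos_of_ne_zero hj0) hdvd
      omega
    · have hsum : (j + k) • g = 0 := by
        have h1 : j • g + g' = 0 := by simpa using hTs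
        rw [hk, ← add_nsmul] at h1
        exact h1
      have hdvd : n ∣ j + k := hord ▸ addOrderOf_dvd_of_nsmul_eq_zero hsum
      have h1 : n ≤ j + k := Nat.le_of_dvd (by omega) hdvd
      have hjk : j + k = n := by
        rcases hdvd with ⟨c, hc⟩
        rcases Nat.lt_or_ge c 2 with h | h
        · interval_cases c <;> omega
        · exfalso
          have := Nat.mul_le_mul_left n h
          omega
      simp only [Multiset.card_add, Multiset.card_replicate, Multiset.card_singleton]
      omega
  refine ⟨?_, key⟩
  obtain ⟨z, hz⟩ : ∃ z : ℤ, z • g = g' :=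
    (AddSubgroup.mem_zmultiples_iff).mp (hg ▸ AddSubgroup.mem_top g')
  have hne : (n : ℤ) ≠ 0 := by exact_mod_cast (by omega : n ≠ 0)
  have hmod : ((z % n).toNat : ℤ) = z % n :=
    Int.toNat_of_nonneg (Int.emod_nonneg z hne)
  have hngN : n • g = 0 := by rw [← hord]; exact addOrderOf_nsmul_eq_zero g
  have hng : (n : ℤ) • g = 0 := by rw [natCast_zsmul]; exact hngN
  have hmodg : (z % n) • g = g' := by
    calc (z % n) • g = (z % n) • g + (n : ℤ) • (z / n) • g := by
          rw [smul_comm ((n:ℤ)) (z / n), hng, smul_zero, add_zero]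
      _ = (z % n + n * (z / n)) • g := by rw [add_zsmul, mul_zsmul]
      _ = z • g := by rw [Int.emod_add_mul_ediv z n]
      _ = g' := hz
  have hzg : (z % n).toNat • g = g' := by
    rw [← natCast_zsmul, hmod]; exact hmodg
  by_cases h0 : (z % n).toNat = 0
  · refine ⟨n - n + 1, key n hn1 le_rfl ?_⟩
    rw [← hzg, h0, hngN]
    simp
  · have hlt : (z % n).toNat ≤ n := by
      have := Int.emod_lt_of_pos z (by exact_mod_cast hn1 : (0:ℤ) < n)
      omega
    exact ⟨n - (z % n).toNat + 1, key _ (Nat.pos_of_ne_zero h0) hlt hzg.symm⟩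
end

section
/- Let n be even, let g be a generator of C_n, let x ∈ [0, n/2 - 1] with n/2 - x odd, and let S = g^{n/2 + x}·(((n+2)/2)g)^{n/2 - x}. Then every nonempty zero-sum subsequence of S has length exactly n/2. -/
lemma aux_stmt15 (m x a b : ℕ) (hm : 0 < m) (hxm : x < m) (ha : a ≤ m + x)
    (hb : b ≤ m - x) (hodd : Odd (m - x)) (hpos : 0 < a + b)
    (hdvd : 2 * m ∣ a + b * (m + 1)) : a + b = m := by
  rcases Nat.even_or_odd b with hbe | hbo
  · -- b even : contradiction
    obtain ⟨k, hk⟩ := hbe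
    have hrw : a + b * (m + 1) = (a + b) + 2 * m * k := by subst hk; ring
    rw [hrw] at hdvd
    have h1 : 2 * m ∣ a + b := (Nat.dvd_add_iff_left (dvd_mul_right (2 * m) k)).mpr hdvd
    obtain ⟨q, hq⟩ := h1
    have hq0 : q ≠ 0 := by rintro rfl; omega
    have hle : 2 * m * q ≤ 2 * m * 1 := by rw [mul_one]; omega
    have hq1 : q ≤ 1 := Nat.le_of_mul_le_mul_left hle (by omega)
    have hq1' : q = 1 := le_antisymm hq1 (Nat.one_le_iff_ne_zero.mpr hq0)
    subst hq1'
    rw [mul_one] at hq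
    obtain ⟨j, hj⟩ := hodd
    omega
  · obtain ⟨k, hk⟩ := hbo
    have hrw : a + b * (m + 1) = (a + b + m) + 2 * m * k := by subst hk; ring
    rw [hrw] at hdvd
    have h1 : 2 * m ∣ a + b + m := (Nat.dvd_add_iff_left (dvd_mul_right (2 * m) k)).mpr hdvd
    obtain ⟨q, hq⟩ := h1
    have hq0 : q ≠ 0 := by rintro rfl; omega
    have hlt : 2 * m * q < 2 * m * 2 := by rw [show 2 * m * 2 = 4 * m by ring]; omega
    have hq1 : q < 2 := Nat.lt_of_mul_lt_mul_left hlt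
    have hq1' : q = 1 := by omega
    subst hq1'
    rw [mul_one] at hq
    omega

theorem stmt_15 (n : ℕ) (hn : 0 < n) (heven : Even n) (g : ZMod n)
    (hg : addOrderOf g = n) (x : ℕ) (hx : x ≤ n / 2 - 1) (hodd : Odd (n / 2 - x))
    (S : Multiset (ZMod n))
    (hS : S = Multiset.replicate (n / 2 + x) g +
      Multiset.replicate (n / 2 - x) (((n + 2) / 2) • g)) :
    ∀ T : Multiset (ZMod n), T ≤ S → T ≠ 0 → T.sum = 0 →
      Multiset.card T = n / 2 := by
  subst hS
  intro T hT hT0 hsum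
  set c : ZMod n := ((n + 2) / 2) • g with hc
  have hm2 : n / 2 * 2 = n := Nat.div_mul_cancel heven.two_dvd
  set m := n / 2 with hmdef
  have hm0 : 0 < m := by omega
  have hxm : x < m := by
    obtain ⟨k, hk⟩ := hodd; omega
  have hk2 : (n + 2) / 2 = m + 1 := by omega
  have hgc : g ≠ c := by
    intro h
    have h1 : (m + 1) • g = g := by rw [hc, hk2] at h; exact h.symm
    have h2 : m • g + g = g := by rw [← succ_nsmul]; exact h1
    have h3 : m • g = 0 := by
      exact add_right_cancel (b := g) (by rw [h2, zero_add] : m • g + g = 0 + g)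
    have h4 : n ∣ m := by
      rw [← hg]; exact addOrderOf_dvd_iff_nsmul_eq_zero.mpr h3
    have := Nat.le_of_dvd hm0 h4
    omega
  set a := T.count g with hadef
  set b := T.count c with hbdef
  have ha : a ≤ m + x := by
    have h1 := Multiset.count_le_of_le g hT
    simpa [Multiset.count_replicate, hgc, Ne.symm hgc] using h1
  have hb : b ≤ m - x := by
    have h1 := Multiset.count_le_of_le c hT
    simpa [Multiset.count_replicate, hgc, Ne.symm hgc] using h1
  have hTeq : T = Multiset.replicate a g + Multiset.replicate b c := by
    ext y
    rw [Multiset.count_add, Multiset.count_replicate, Multiset.count_replicate]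
    by_cases hy1 : g = y
    · subst hy1
      rw [if_pos rfl, if_neg (Ne.symm hgc), add_zero]
    · rw [if_neg hy1]
      by_cases hy2 : c = y
      · subst hy2
        rw [if_pos rfl, zero_add]
      · rw [if_neg hy2, add_zero]
        have h1 := Multiset.count_le_of_le y hT
        rw [Multiset.count_add, Multiset.count_replicate, Multiset.count_replicate,
          if_neg hy1, if_neg hy2] at h1
        omega
  have hcard : Multiset.card T = a + b := by
    rw [hTeq]; simp
  have hsum2 : ((a + b * (m + 1)) • g : ZMod n) = 0 := by
    rw [hTeq] at hsum
    rw [Multiset.sum_add, Multiset.sum_replicate, Multiset.sum_replicate, hc, hk2,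
      smul_smul] at hsum
    rw [add_smul]
    exact hsum
  have hdvd : n ∣ a + b * (m + 1) := by
    rw [← hg]; exact addOrderOf_dvd_iff_nsmul_eq_zero.mpr hsum2
  have hdvd2 : 2 * m ∣ a + b * (m + 1) := by
    rwa [show 2 * m = n by omega]
  have hpos : 0 < a + b := by
    have := Multiset.card_pos.mpr hT0
    omega
  rw [hcard]
  exact aux_stmt15 m x a b hm0 hxm ha hb hodd hpos hdvd2
end

section
/- Let n ≡ 2 (mod 4), let g be a generator of C_n, let x ∈ [0, n/2 - 1] be even, and let S = (2g)^{n/2 + x}·(((n+4)/2)g)^{n/2 - x}. Then every nonempty zero-sum subsequence of S has length exactly n/2. -/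
lemma arith_16 (m x i j : ℕ) (hmodd : m % 2 = 1) (hxe : x % 2 = 0) (hx : x ≤ m - 1)
    (hi : i ≤ m + x) (hj : j ≤ m - x) (hpos : 0 < i + j)
    (hd : 2 * m ∣ i * 2 + j * (m + 2)) : i + j = m := by
  obtain ⟨k, hk⟩ := hd
  have hjeven : 2 ∣ j := by
    have h2 : (2 : ℕ) ∣ j * (m + 2) := by
      have ha : (2 : ℕ) ∣ i * 2 + j * (m + 2) := ⟨m * k, by rw [hk]; ring⟩
      exact (Nat.dvd_add_right ⟨i, by ring⟩).mp ha
    rcases (Nat.Prime.dvd_mul Nat.prime_two).mp h2 with h | h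
    · exact h
    · omega
  obtain ⟨t, ht⟩ := hjeven
  have hk' : (i : ℤ) * 2 + (j : ℤ) * ((m : ℤ) + 2) = 2 * m * k := by exact_mod_cast hk
  have ht' : (j : ℤ) = 2 * t := by exact_mod_cast ht
  have hk2 : (i : ℤ) + (t : ℤ) * ((m : ℤ) + 2) = (m : ℤ) * k := by
    have h2 : 2 * ((i : ℤ) + (t : ℤ) * ((m : ℤ) + 2)) = 2 * ((m : ℤ) * k) := by
      linear_combination hk' - ((m : ℤ) + 2) * ht'
    exact mul_left_cancel₀ (by norm_num) h2
  have hdvd' : (m : ℤ) ∣ ((i + j : ℕ) : ℤ) := by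
    refine ⟨(k : ℤ) - t, ?_⟩
    push_cast
    linear_combination hk2 + ht'
  have hdvd : m ∣ i + j := Int.natCast_dvd_natCast.mp hdvd'
  obtain ⟨c, hc⟩ := hdvd
  have hc2 : c ≤ 2 := by
    by_contra h
    push_neg at h
    have h3 : m * 3 ≤ m * c := Nat.mul_le_mul_left m (by omega)
    omega
  interval_cases c <;> omega

lemma struct_16 {α : Type*} [DecidableEq α] (a b : α) (hab : a ≠ b) (p q : ℕ)
    (T : Multiset α) (hT : T ≤ Multiset.replicate p a + Multiset.replicate q b) :
    T = Multiset.replicate (T.count a) a + Multiset.replicate (T.count b) b := by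
  ext y
  rw [Multiset.count_add, Multiset.count_replicate, Multiset.count_replicate]
  by_cases h1 : y = a
  · subst h1
    rw [if_pos rfl, if_neg (Ne.symm hab), add_zero]
  · by_cases h2 : y = b
    · subst h2
      rw [if_neg hab, if_pos rfl, zero_add]
    · rw [if_neg (fun h => h1 h.symm), if_neg (fun h => h2 h.symm)]
      have hle := Multiset.count_le_of_le y hT
      rw [Multiset.count_add, Multiset.count_replicate, Multiset.count_replicate,
        if_neg (fun h => h1 h.symm), if_neg (fun h => h2 h.symm)] at hle
      omega

theorem stmt_16 (n : ℕ) (hn : n % 4 = 2) (g : ZMod n) (hg : addOrderOf g = n)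
    (x : ℕ) (hx : x ≤ n / 2 - 1) (hxeven : Even x)
    (S : Multiset (ZMod n))
    (hS : S = Multiset.replicate (n / 2 + x) (2 • g) +
      Multiset.replicate (n / 2 - x) (((n + 4) / 2) • g)) :
    ∀ T : Multiset (ZMod n), T ≤ S → T ≠ 0 → T.sum = 0 →
      Multiset.card T = n / 2 := by
  intro T hT hT0 hTsum
  have hn2 : n = 2 * (n / 2) := by omega
  have hmodd : n / 2 % 2 = 1 := by omega
  have hb : (n + 4) / 2 = n / 2 + 2 := by omega
  rw [hb] at hS
  -- 2 • g ≠ (n/2 + 2) • g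
  have hab : (2 : ℕ) • g ≠ (n / 2 + 2) • g := by
    intro h
    have h0 : (n / 2) • g = 0 := by
      have h1 : (n / 2) • g + 2 • g = 0 + 2 • g := by
        rw [zero_add, ← add_nsmul, ← h]
      exact add_right_cancel h1
    have hd : n ∣ n / 2 := by
      have := addOrderOf_dvd_of_nsmul_eq_zero h0
      rwa [hg] at this
    have := Nat.le_of_dvd (by omega) hd
    omega
  rw [hS] at hT
  have hTeq := struct_16 _ _ hab _ _ T hT
  have hile : T.count (2 • g) ≤ n / 2 + x := by
    have := Multiset.count_le_of_le (2 • g) hT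
    rwa [Multiset.count_add, Multiset.count_replicate, Multiset.count_replicate,
      if_pos rfl, if_neg (Ne.symm hab), add_zero] at this
  have hjle : T.count ((n / 2 + 2) • g) ≤ n / 2 - x := by
    have := Multiset.count_le_of_le ((n / 2 + 2) • g) hT
    rwa [Multiset.count_add, Multiset.count_replicate, Multiset.count_replicate,
      if_neg hab, if_pos rfl, zero_add] at this
  have hcard : Multiset.card T = T.count (2 • g) + T.count ((n / 2 + 2) • g) := by
    conv_lhs => rw [hTeq]
    simp
  have hpos : 0 < T.count (2 • g) + T.count ((n / 2 + 2) • g) := by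
    rcases Nat.eq_zero_or_pos (T.count (2 • g) + T.count ((n / 2 + 2) • g)) with h | h
    · exfalso; apply hT0
      rw [← Multiset.card_eq_zero, hcard, h]
    · exact h
  have hsum : (T.count (2 • g) * 2 + T.count ((n / 2 + 2) • g) * (n / 2 + 2)) • g = 0 := by
    rw [hTeq] at hTsum
    rw [Multiset.sum_add, Multiset.sum_replicate, Multiset.sum_replicate] at hTsum
    rw [add_nsmul, ← smul_smul, ← smul_smul]
    exact hTsum
  have hdvd : 2 * (n / 2) ∣ T.count (2 • g) * 2 + T.count ((n / 2 + 2) • g) * (n / 2 + 2) := by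
    have h := addOrderOf_dvd_of_nsmul_eq_zero hsum
    rw [hg] at h
    rw [show 2 * (n / 2) = n from by omega]
    exact h
  rw [hcard]
  exact arith_16 (n / 2) x _ _ hmodd (Nat.even_iff.mp hxeven) hx hile hjle hpos hdvd
end
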